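/- Let q ≥ 3, r ≥ 1, and let (S0, S1) be a spherical bitrade in the Hamming graph H(qr, q). Then the pair (S0 × {0} ∪ S1 × {1}, S0 × {1} ∪ S1 × {0}) is a perfect bitrade in H(qr+1, q), where C × {a} denotes the set of tuples of C each extended by one extra coordinate equal to the alphabet symbol a. -/

import Mathlib

open scoped BigOperators

/-- The ball of radius 1 centered at `x` in a graph `G`. -/
def ball1 {V : Type*} (G : SimpleGraph V) (x : V) : Set V := {y | y = x ∨ G.Adj x y}

/-- A perfect one-error-correcting code: the balls of radius 1 centered at the
vertices of `C` partition the vertex set. -/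
def IsPerfectCode {V : Type*} (G : SimpleGraph V) (C : Set V) : Prop :=
  ∀ x : V, ∃! c, c ∈ C ∧ c ∈ ball1 G x

/-- A perfect bitrade: a pair of disjoint nonempty vertex sets such that every ball of
radius 1 contains exactly one vertex of each, or none of either. -/
def IsPerfectBitrade {V : Type*} (G : SimpleGraph V) (T0 T1 : Set V) : Prop :=
  Disjoint T0 T1 ∧ T0.Nonempty ∧ T1.Nonempty ∧
    ∀ x : V,
      ((∃! y, y ∈ T0 ∧ y ∈ ball1 G x) ∧ (∃! y, y ∈ T1 ∧ y ∈ ball1 G x)) ∨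
        (∀ y, y ∈ T0 ∪ T1 → y ∉ ball1 G x)

/-- A spherical bitrade: a pair of disjoint nonempty vertex sets such that every sphere of
radius 1 contains exactly one vertex of each, or none of either. -/
def IsSphericalBitrade {V : Type*} (G : SimpleGraph V) (S0 S1 : Set V) : Prop :=
  Disjoint S0 S1 ∧ S0.Nonempty ∧ S1.Nonempty ∧
    ∀ x : V,
      ((∃! y, y ∈ S0 ∧ G.Adj x y) ∧ (∃! y, y ∈ S1 ∧ G.Adj x y)) ∨
        (∀ y, y ∈ S0 ∪ S1 → ¬ G.Adj x y)

/-- The Hamming graph `H(n,q)`: vertices are `n`-tuples over an alphabet of size `q`,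
adjacent iff they differ in exactly one coordinate. -/
def hammingGraph (n q : ℕ) : SimpleGraph (Fin n → Fin q) where
  Adj x y := hammingDist x y = 1
  symm := by constructor; intro x y h; show hammingDist y x = 1; rw [hammingDist_comm]; exact h
  loopless := by constructor; intro x h; simp [hammingDist_self] at h

/-- `f` is a `μ`-eigenfunction of `G`: `f` is not identically zero and
`μ · f x = ∑_{y ∈ O(x)} f y` for every vertex `x`. -/
def IsEigenfun {V : Type*} (G : SimpleGraph V) (μ : ℝ) (f : V → ℝ) : Prop :=
  f ≠ 0 ∧ ∀ x : V, μ * f x = ∑ᶠ y ∈ G.neighborSet x, f y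

/-- The characteristic function of a set of vertices. -/
noncomputable def chi {V : Type*} (C : Set V) : V → ℝ := Set.indicator C 1

/-- The code `C` has minimum (graph) distance exactly `d`. -/
def HasMinDist {V : Type*} (G : SimpleGraph V) (C : Set V) (d : ℕ) : Prop :=
  (∀ x ∈ C, ∀ y ∈ C, x ≠ y → (d : ℕ∞) ≤ G.edist x y) ∧
    ∃ x ∈ C, ∃ y ∈ C, x ≠ y ∧ G.edist x y = d

/-- The code `C` of `n`-tuples has minimum Hamming distance exactly `d`. -/
def HasMinHDist {n q : ℕ} (C : Set (Fin n → Fin q)) (d : ℕ) : Prop :=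
  (∀ x ∈ C, ∀ y ∈ C, x ≠ y → d ≤ hammingDist x y) ∧
    ∃ x ∈ C, ∃ y ∈ C, x ≠ y ∧ hammingDist x y = d

/-- `G` is distance-regular with intersection numbers `p i j k`. -/
def IsDistRegular {V : Type*} (G : SimpleGraph V) (p : ℕ → ℕ → ℕ → ℕ) : Prop :=
  G.Connected ∧ ∀ (i j k : ℕ) (x y : V), G.edist x y = k →
    {z : V | G.edist x z = i ∧ G.edist z y = j}.ncard = p i j k



section Aux

variable {m q : ℕ}

lemma hd_sum (x y : Fin m → Fin q) :
    hammingDist x y = ∑ i, if x i = y i then 0 else 1 := by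
  rw [hammingDist, Finset.card_filter]
  congr 1
  ext i
  by_cases h : x i = y i <;> simp [h]

lemma hd_snoc (u v : Fin m → Fin q) (a b : Fin q) :
    hammingDist (Fin.snoc u a : Fin (m+1) → Fin q) (Fin.snoc v b)
      = hammingDist u v + if a = b then 0 else 1 := by
  rw [hd_sum, hd_sum, Fin.sum_univ_castSucc]
  simp

lemma adj_snoc_iff (u v : Fin m → Fin q) (a b : Fin q) :
    hammingDist (Fin.snoc u a : Fin (m+1) → Fin q) (Fin.snoc v b) = 1 ↔
      (hammingDist u v = 1 ∧ a = b) ∨ (u = v ∧ a ≠ b) := by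
  rw [hd_snoc]
  by_cases h : a = b
  · simp [h]
  · rw [if_neg h]
    constructor
    · intro h1
      right
      exact ⟨eq_of_hammingDist_eq_zero (by omega), h⟩
    · rintro (⟨-, hab⟩ | ⟨rfl, -⟩)
      · exact absurd hab h
      · simp [hammingDist_self]

lemma snoc_inj {u v : Fin m → Fin q} {a b : Fin q}
    (h : (Fin.snoc u a : Fin (m+1) → Fin q) = Fin.snoc v b) : u = v ∧ a = b := by
  constructor
  · funext i
    have := congrFun h i.castSucc
    simpa using this
  · have := congrFun h (Fin.last m)
    simpa using this

lemma exists_common_neighbor (hq : 3 ≤ q) {u v : Fin m → Fin q}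
    (huv : hammingDist u v = 1) :
    ∃ w, hammingDist w u = 1 ∧ hammingDist w v = 1 := by
  obtain ⟨i0, hi⟩ := Finset.card_eq_one.mp
    (show (Finset.univ.filter fun k => u k ≠ v k).card = 1 from huv)
  have hmem : ∀ j, u j ≠ v j ↔ j = i0 := by
    intro j
    constructor
    · intro hj
      have : j ∈ Finset.univ.filter fun k => u k ≠ v k := by simp [hj]
      rw [hi] at this; simpa using this
    · intro hj
      rw [hj]
      have : i0 ∈ Finset.univ.filter fun k => u k ≠ v k := by rw [hi]; simp
      simpa using this
  have hui : u i0 ≠ v i0 := (hmem i0).mpr rfl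
  have : ∃ c : Fin q, c ≠ u i0 ∧ c ≠ v i0 := by
    by_contra hc
    push_neg at hc
    have hsub : (Finset.univ : Finset (Fin q)) ⊆ {u i0, v i0} := by
      intro c _
      rcases Classical.em (c = u i0) with h | h
      · simp [h]
      · simp [hc c h]
    have := Finset.card_le_card hsub
    have h2 : ({u i0, v i0} : Finset (Fin q)).card ≤ 2 := Finset.card_insert_le _ _ |>.trans (by simp)
    simp [Finset.card_univ] at this
    omega
  obtain ⟨c, hcu, hcv⟩ := this
  refine ⟨Function.update u i0 c, ?_, ?_⟩
  · rw [show ∀ (x y : Fin m → Fin q), hammingDist x y = (Finset.univ.filter fun k => x k ≠ y k).card from fun _ _ => rfl, Finset.card_eq_one]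
    refine ⟨i0, ?_⟩
    ext j
    simp only [Finset.mem_filter, Finset.mem_univ, true_and, Finset.mem_singleton]
    constructor
    · intro hj
      by_contra hji
      rw [Function.update_of_ne hji] at hj
      exact hj rfl
    · rintro rfl
      rw [Function.update_self]
      exact hcu
  · rw [show ∀ (x y : Fin m → Fin q), hammingDist x y = (Finset.univ.filter fun k => x k ≠ y k).card from fun _ _ => rfl, Finset.card_eq_one]
    refine ⟨i0, ?_⟩
    ext j
    simp only [Finset.mem_filter, Finset.mem_univ, true_and, Finset.mem_singleton]
    constructor
    · intro hj
      by_contra hji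
      rw [Function.update_of_ne hji] at hj
      exact hj ((not_iff_not.mpr (hmem j)).mpr hji |> not_not.mp)
    · rintro rfl
      rw [Function.update_self]
      exact hcv

end Aux

section Helpers

variable {m q : ℕ}

lemma hG_adj {x y : Fin m → Fin q} :
    (hammingGraph m q).Adj x y ↔ hammingDist x y = 1 := Iff.rfl

lemma mem_ball1_iff {V : Type*} (G : SimpleGraph V) (x y : V) :
    y ∈ ball1 G x ↔ y = x ∨ G.Adj x y := Iff.rfl

lemma helperA {S0 S1 : Set (Fin m → Fin q)} {c0 c1 : Fin q} (hc : c0 ≠ c1)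
    (hdisj : Disjoint S0 S1)
    (hA : ∀ u ∈ S0 ∪ S1, ∀ v ∈ S0 ∪ S1, ¬ (hammingGraph m q).Adj u v)
    {x' : Fin m → Fin q} (hx : x' ∈ S0) (a : Fin q) :
    ∃! y, y ∈ ((fun x => Fin.snoc x c0) '' S0 ∪ (fun x => Fin.snoc x c1) '' S1) ∧
      y ∈ ball1 (hammingGraph (m + 1) q) (Fin.snoc x' a) := by
  refine ⟨Fin.snoc x' c0, ⟨Or.inl ⟨x', hx, rfl⟩, ?_⟩, ?_⟩
  · rw [mem_ball1_iff]
    by_cases hac : a = c0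
    · left; rw [hac]
    · right
      rw [hG_adj, adj_snoc_iff]
      exact Or.inr ⟨rfl, hac⟩
  · rintro y ⟨hy1, hy2⟩
    rw [mem_ball1_iff] at hy2
    rcases hy1 with ⟨s, hs, rfl⟩ | ⟨s, hs, rfl⟩
    · rcases hy2 with heq | hadj
      · obtain ⟨h1, -⟩ := snoc_inj heq; rw [h1]
      · rcases (adj_snoc_iff x' s a c0).mp (hG_adj.mp hadj) with ⟨hd, -⟩ | ⟨rfl, -⟩
        · exact absurd (hG_adj.mpr hd) (hA x' (Or.inl hx) s (Or.inl hs))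
        · rfl
    · rcases hy2 with heq | hadj
      · obtain ⟨h1, -⟩ := snoc_inj heq
        exact absurd hx (Set.disjoint_left.mp hdisj.symm (h1 ▸ hs))
      · rcases (adj_snoc_iff x' s a c1).mp (hG_adj.mp hadj) with ⟨hd, -⟩ | ⟨rfl, -⟩
        · exact absurd (hG_adj.mpr hd) (hA x' (Or.inl hx) s (Or.inr hs))
        · exact absurd hx (Set.disjoint_left.mp hdisj.symm hs)

lemma helperB {S0 S1 : Set (Fin m → Fin q)} {c0 c1 : Fin q} (hc : c0 ≠ c1)
    {x' : Fin m → Fin q} (hx : x' ∉ S0 ∪ S1)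
    (h0 : ∃! y, y ∈ S0 ∧ (hammingGraph m q).Adj x' y) :
    ∃! y, y ∈ ((fun x => Fin.snoc x c0) '' S0 ∪ (fun x => Fin.snoc x c1) '' S1) ∧
      y ∈ ball1 (hammingGraph (m + 1) q) (Fin.snoc x' c0) := by
  obtain ⟨y0, ⟨hy0S, hy0adj⟩, hy0uniq⟩ := h0
  refine ⟨Fin.snoc y0 c0, ⟨Or.inl ⟨y0, hy0S, rfl⟩, ?_⟩, ?_⟩
  · rw [mem_ball1_iff]
    right
    rw [hG_adj, adj_snoc_iff]
    exact Or.inl ⟨hG_adj.mp hy0adj, rfl⟩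
  · rintro y ⟨hy1, hy2⟩
    rw [mem_ball1_iff] at hy2
    rcases hy1 with ⟨s, hs, rfl⟩ | ⟨s, hs, rfl⟩
    · rcases hy2 with heq | hadj
      · obtain ⟨h1, -⟩ := snoc_inj heq
        exact absurd (h1 ▸ hs) (fun h => hx (Or.inl h))
      · rcases (adj_snoc_iff x' s c0 c0).mp (hG_adj.mp hadj) with ⟨hd, -⟩ | ⟨heq, -⟩
        · rw [hy0uniq s ⟨hs, hG_adj.mpr hd⟩]
        · exact absurd (heq ▸ hs) (fun h => hx (Or.inl h))
    · rcases hy2 with heq | hadj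
      · obtain ⟨-, h2⟩ := snoc_inj heq
        exact absurd h2 hc.symm
      · rcases (adj_snoc_iff x' s c0 c1).mp (hG_adj.mp hadj) with ⟨-, h2⟩ | ⟨heq, -⟩
        · exact absurd h2 hc
        · exact absurd (heq ▸ hs) (fun h => hx (Or.inr h))

end Helpers

section Main

/-- From a spherical bitrade `(S0,S1)` in `H(qr,q)` one obtains the perfect
bitrade `(S0 × {0} ∪ S1 × {1}, S0 × {1} ∪ S1 × {0})` in `H(qr+1,q)`, where `C × {a}` appends
the symbol `a` as an extra last coordinate to every tuple of `C`. -/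
theorem statement8 (q r : ℕ) (hq : 3 ≤ q) (hr : 1 ≤ r)
    (S0 S1 : Set (Fin (q * r) → Fin q))
    (hbt : IsSphericalBitrade (hammingGraph (q * r) q) S0 S1) :
    IsPerfectBitrade (hammingGraph (q * r + 1) q)
      ((fun x => Fin.snoc x (⟨0, by omega⟩ : Fin q)) '' S0 ∪
        (fun x => Fin.snoc x (⟨1, by omega⟩ : Fin q)) '' S1)
      ((fun x => Fin.snoc x (⟨1, by omega⟩ : Fin q)) '' S0 ∪
        (fun x => Fin.snoc x (⟨0, by omega⟩ : Fin q)) '' S1) := by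
  obtain ⟨hdisj, hne0, hne1, hsph⟩ := hbt
  set z0 : Fin q := ⟨0, by omega⟩ with hz0def
  set z1 : Fin q := ⟨1, by omega⟩ with hz1def
  have hz01 : z0 ≠ z1 := by simp [hz0def, hz1def, Fin.ext_iff]
  -- no two elements of S0 are adjacent
  have hS0S0 : ∀ u ∈ S0, ∀ v ∈ S0, ¬ (hammingGraph (q * r) q).Adj u v := by
    intro u hu v hv hadj
    obtain ⟨w, hwu, hwv⟩ := exists_common_neighbor hq (hG_adj.mp hadj)
    rcases hsph w with ⟨⟨y, -, hyu⟩, -⟩ | hnone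
    · exact hadj.ne (((hyu u ⟨hu, hG_adj.mpr hwu⟩)).trans (hyu v ⟨hv, hG_adj.mpr hwv⟩).symm)
    · exact hnone u (Or.inl hu) (hG_adj.mpr hwu)
  have hS1S1 : ∀ u ∈ S1, ∀ v ∈ S1, ¬ (hammingGraph (q * r) q).Adj u v := by
    intro u hu v hv hadj
    obtain ⟨w, hwu, hwv⟩ := exists_common_neighbor hq (hG_adj.mp hadj)
    rcases hsph w with ⟨-, ⟨y, -, hyu⟩⟩ | hnone
    · exact hadj.ne (((hyu u ⟨hu, hG_adj.mpr hwu⟩)).trans (hyu v ⟨hv, hG_adj.mpr hwv⟩).symm)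
    · exact hnone u (Or.inr hu) (hG_adj.mpr hwu)
  have hS0S1 : ∀ u ∈ S0, ∀ v ∈ S1, ¬ (hammingGraph (q * r) q).Adj u v := by
    intro u hu v hv hadj
    rcases hsph u with ⟨⟨y, ⟨hyS, hyadj⟩, -⟩, -⟩ | hnone
    · exact hS0S0 u hu y hyS hyadj
    · exact hnone v (Or.inr hv) hadj
  have hA : ∀ u ∈ S0 ∪ S1, ∀ v ∈ S0 ∪ S1, ¬ (hammingGraph (q * r) q).Adj u v := by
    rintro u (hu | hu) v (hv | hv) hadj
    · exact hS0S0 u hu v hv hadj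
    · exact hS0S1 u hu v hv hadj
    · exact hS0S1 v hv u hu hadj.symm
    · exact hS1S1 u hu v hv hadj
  have hA' : ∀ u ∈ S1 ∪ S0, ∀ v ∈ S1 ∪ S0, ¬ (hammingGraph (q * r) q).Adj u v :=
    fun u hu v hv => hA u hu.symm v hv.symm
  refine ⟨?_, ?_, ?_, ?_⟩
  · -- disjointness
    rw [Set.disjoint_left]
    rintro y (⟨s, hs, rfl⟩ | ⟨s, hs, rfl⟩) (⟨t, ht, heq⟩ | ⟨t, ht, heq⟩)
    · exact absurd (snoc_inj heq).2 hz01.symm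
    · exact Set.disjoint_left.mp hdisj hs ((snoc_inj heq).1 ▸ ht)
    · exact Set.disjoint_left.mp hdisj ((snoc_inj heq).1 ▸ ht) hs
    · exact absurd (snoc_inj heq).2 hz01
  · obtain ⟨s, hs⟩ := hne0
    exact ⟨_, Or.inl ⟨s, hs, rfl⟩⟩
  · obtain ⟨s, hs⟩ := hne0
    exact ⟨_, Or.inl ⟨s, hs, rfl⟩⟩
  · intro x
    obtain ⟨x', a, rfl⟩ : ∃ x' a, x = Fin.snoc x' a :=
      ⟨Fin.init x, x (Fin.last (q * r)), (Fin.snoc_init_self x).symm⟩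
    by_cases h0 : x' ∈ S0
    · exact Or.inl ⟨helperA hz01 hdisj hA h0 a, helperA hz01.symm hdisj hA h0 a⟩
    by_cases h1 : x' ∈ S1
    · left
      constructor
      · rw [Set.union_comm]
        exact helperA hz01.symm hdisj.symm hA' h1 a
      · rw [Set.union_comm]
        exact helperA hz01 hdisj.symm hA' h1 a
    have hx : x' ∉ S0 ∪ S1 := by rintro (h | h) <;> [exact h0 h; exact h1 h]
    rcases hsph x' with ⟨hE0, hE1⟩ | hnone
    · by_cases ha0 : a = z0
      · subst ha0
        left
        constructor
        · exact helperB hz01 hx hE0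
        · rw [Set.union_comm]
          exact helperB hz01 (by rintro (h | h); exacts [h1 h, h0 h]) hE1
      by_cases ha1 : a = z1
      · subst ha1
        left
        constructor
        · rw [Set.union_comm]
          exact helperB hz01.symm (by rintro (h | h); exacts [h1 h, h0 h]) hE1
        · exact helperB hz01.symm hx hE0
      · right
        have hno : ∀ (S : Set (Fin (q * r) → Fin q)) (c : Fin q), a ≠ c → x' ∉ S →
            ∀ y ∈ (fun x => Fin.snoc x c) '' S,
              y ∉ ball1 (hammingGraph (q * r + 1) q) (Fin.snoc x' a) := by
          rintro S c hac hxS y ⟨s, hs, rfl⟩ hball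
          rcases (mem_ball1_iff _ _ _).mp hball with heq | hadj
          · exact hac (snoc_inj heq).2.symm
          · rcases (adj_snoc_iff x' s a c).mp (hG_adj.mp hadj) with ⟨-, h2⟩ | ⟨h1, -⟩
            · exact hac h2
            · exact hxS (h1 ▸ hs)
        rintro y (hy | hy)
        · rcases hy with hy | hy
          · exact hno S0 z0 ha0 h0 _ hy
          · exact hno S1 z1 ha1 h1 _ hy
        · rcases hy with hy | hy
          · exact hno S0 z1 ha1 h0 _ hy
          · exact hno S1 z0 ha0 h1 _ hy
    · right
      have hno2 : ∀ (S : Set (Fin (q * r) → Fin q)) (c : Fin q), S ⊆ S0 ∪ S1 →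
          ∀ y ∈ (fun x => Fin.snoc x c) '' S,
            y ∉ ball1 (hammingGraph (q * r + 1) q) (Fin.snoc x' a) := by
        rintro S c hS y ⟨s, hs, rfl⟩ hball
        rcases (mem_ball1_iff _ _ _).mp hball with heq | hadj
        · exact hx ((snoc_inj heq).1 ▸ hS hs)
        · rcases (adj_snoc_iff x' s a c).mp (hG_adj.mp hadj) with ⟨hd, -⟩ | ⟨h1, -⟩
          · exact hnone s (hS hs) (hG_adj.mpr hd)
          · exact hx (h1 ▸ hS hs)
      rintro y (hy | hy)
      · rcases hy with hy | hy
        · exact hno2 S0 z0 Set.subset_union_left _ hy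
        · exact hno2 S1 z1 Set.subset_union_right _ hy
      · rcases hy with hy | hy
        · exact hno2 S0 z1 Set.subset_union_left _ hy
        · exact hno2 S1 z0 Set.subset_union_right _ hy

end Main
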